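/- arXiv:2310.10758 — 2 statements merged into one kernel-verified Lean document; each statement's English description precedes it below -/
import Mathlib

section
/- Let X be a feasible solution of the semidefinite program MT(x, r, Y) for vectors Y = (Y_1, ..., Y_k) in R^d, and let Y' be obtained from Y by replacing the i-th vector with an arbitrary vector Y_i' in R^d. Define X' by setting to zero every entry of X in the row or column indexed by b_i and leaving all other entries unchanged. Then X' is a feasible solution of MT(x, r, Y'). -/
/-- Index set for the SDP `MT(x, r, Y)`: the symbol `1`, then `b_1, …, b_k`,
then `v_1, …, v_d`. -/
abbrev MTIdx (k d : ℕ) := Unit ⊕ Fin k ⊕ Fin d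

def MTone {k d : ℕ} : MTIdx k d := Sum.inl ()
def MTb {k d : ℕ} (i : Fin k) : MTIdx k d := Sum.inr (Sum.inl i)
def MTv {k d : ℕ} (j : Fin d) : MTIdx k d := Sum.inr (Sum.inr j)

/-- Feasibility for the SDP `MT(x, r, Y)`. -/
def MTFeasible {k d : ℕ} (x : Fin d → ℝ) (r : ℝ) (Y : Fin k → Fin d → ℝ)
    (X : Matrix (MTIdx k d) (MTIdx k d) ℝ) : Prop :=
  X.PosSemidef ∧ X MTone MTone = 1 ∧ (∑ j, X (MTv j) (MTv j)) = 1 ∧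
    (∀ i, X (MTb i) (MTb i) = X MTone (MTb i)) ∧
    ∀ i, (∑ j, X (MTb i) (MTv j) * (Y i j - x j)) ≥ r * X (MTb i) (MTb i)

private lemma diag_mul_mul_diag {n : Type*} [Fintype n] [DecidableEq n]
    (v : n → ℝ) (X : Matrix n n ℝ) :
    Matrix.diagonal v * X * (Matrix.diagonal v).conjTranspose
      = Matrix.of fun a c => v a * X a c * v c := by
  ext a c
  simp [Matrix.mul_apply, Matrix.diagonal_apply, Finset.sum_ite_eq, mul_comm]

/-- Zeroing out the row and column indexed by `b i` of a feasible solution of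
`MT(x, r, Y)` yields a feasible solution of `MT(x, r, Y')`, where `Y'` is `Y`
with the `i`-th vector replaced by an arbitrary vector `Yi'`. -/
theorem mtFeasible_zero_row_col {k d : ℕ} (x : Fin d → ℝ) (r : ℝ) (hr : 0 < r)
    (Y : Fin k → Fin d → ℝ) (i : Fin k) (Yi' : Fin d → ℝ)
    (X : Matrix (MTIdx k d) (MTIdx k d) ℝ) (hX : MTFeasible x r Y X) :
    MTFeasible x r (Function.update Y i Yi')
      (Matrix.of fun a c => if a = MTb i ∨ c = MTb i then 0 else X a c) := by
  obtain ⟨hpsd, h1, hv, hb, hcon⟩ := hX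
  have hone : (MTone : MTIdx k d) ≠ MTb i := by simp [MTone, MTb]
  have hvne : ∀ j : Fin d, (MTv j : MTIdx k d) ≠ MTb i := by simp [MTv, MTb]
  refine ⟨?_, ?_, ?_, ?_, ?_⟩
  · set e : MTIdx k d → ℝ := fun a => if a = MTb i then 0 else 1 with he
    have key : (Matrix.of fun a c => if a = MTb i ∨ c = MTb i then 0 else X a c)
        = Matrix.diagonal e * X * (Matrix.diagonal e).conjTranspose := by
      rw [diag_mul_mul_diag]
      ext a c
      by_cases ha : a = MTb i <;> by_cases hc : c = MTb i <;>
        simp [he, ha, hc]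
    rw [key]
    exact hpsd.mul_mul_conjTranspose_same (Matrix.diagonal e)
  · simpa [hone] using h1
  · simpa [hvne] using hv
  · intro i'
    by_cases h : i' = i
    · simp [h]
    · have hne : (MTb i' : MTIdx k d) ≠ MTb i := by simp [MTb, h]
      simpa [hne, hone] using hb i'
  · intro i'
    by_cases h : i' = i
    · subst h
      simp [le_of_eq]
    · have hne : (MTb i' : MTIdx k d) ≠ MTb i := by simp [MTb, h]
      simpa [hne, hvne, Function.update_of_ne h] using hcon i'
end

section
/- (Nesterov) There is a constant K = sqrt(pi/2) <= 2 such that for every matrix M in R^{n x d}, the optimal value m of the semidefinite programming relaxation TOR of the 2-to-1 norm of M satisfies m <= sqrt(pi/2) * ||M||_{2->1}. -/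
/-- Index set for the SDP relaxation `TOR`: the symbol `1`, then
`σ_1, …, σ_n`, then `v_1, …, v_d`. -/
abbrev TORIdx (n d : ℕ) := Unit ⊕ Fin n ⊕ Fin d

def TORone {n d : ℕ} : TORIdx n d := Sum.inl ()
def TORsig {n d : ℕ} (i : Fin n) : TORIdx n d := Sum.inr (Sum.inl i)
def TORv {n d : ℕ} (j : Fin d) : TORIdx n d := Sum.inr (Sum.inr j)

/-- Feasibility for the SDP relaxation `TOR` of the 2-to-1 norm. -/
def TORFeasible {n d : ℕ} (X : Matrix (TORIdx n d) (TORIdx n d) ℝ) : Prop :=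
  X.PosSemidef ∧ X TORone TORone = 1 ∧ (∑ j, X (TORv j) (TORv j)) = 1 ∧
    ∀ i, X (TORsig i) (TORsig i) = 1

/-- Optimal value of the SDP relaxation `TOR` for a matrix `M`. -/
noncomputable def TORval {n d : ℕ} (M : Matrix (Fin n) (Fin d) ℝ) : ℝ :=
  sSup {t | ∃ X, TORFeasible X ∧ t = ∑ i, ∑ j, M i j * X (TORsig i) (TORv j)}

/-- The 2-to-1 norm of a matrix `M`: the maximum over unit vectors `v` of
`‖M v‖₁`. -/
noncomputable def normTwoToOne {n d : ℕ} (M : Matrix (Fin n) (Fin d) ℝ) : ℝ :=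
  sSup {t | ∃ v : Fin d → ℝ, (∑ j, (v j) ^ 2) = 1 ∧ t = ∑ i, |∑ j, M i j * v j|}


open MeasureTheory Real Filter

noncomputable def gpdf (t : ℝ) : ℝ := (Real.sqrt (2 * Real.pi))⁻¹ * Real.exp (-(1/2) * t ^ 2)

lemma sqrt_two_pi_pos : 0 < Real.sqrt (2 * Real.pi) :=
  Real.sqrt_pos.2 (by positivity)

lemma gpdf_nonneg (t : ℝ) : 0 ≤ gpdf t := by
  unfold gpdf; positivity

lemma gpdf_neg (t : ℝ) : gpdf (-t) = gpdf t := by simp [gpdf]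

lemma continuous_gpdf : Continuous gpdf := by
  unfold gpdf; fun_prop

lemma integrable_gpdf : Integrable gpdf :=
  (integrable_exp_neg_mul_sq (by norm_num : (0:ℝ) < 1/2)).const_mul _

lemma integral_gpdf : ∫ t, gpdf t = 1 := by
  unfold gpdf
  rw [integral_const_mul, integral_gaussian,
    show Real.pi / (1/2) = 2 * Real.pi by ring]
  exact inv_mul_cancel₀ (ne_of_gt sqrt_two_pi_pos)

lemma integrable_id_gpdf : Integrable (fun t => t * gpdf t) := by
  have := (integrable_mul_exp_neg_mul_sq (by norm_num : (0:ℝ) < 1/2)).const_mul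
    (Real.sqrt (2 * Real.pi))⁻¹
  refine this.congr ?_
  filter_upwards with t
  unfold gpdf; ring

lemma integrable_abs_gpdf : Integrable (fun t => |t| * gpdf t) := by
  refine integrable_id_gpdf.abs.congr ?_
  filter_upwards with t
  rw [abs_mul, abs_of_nonneg (gpdf_nonneg t)]

lemma integrable_sq_gpdf : Integrable (fun t => t ^ 2 * gpdf t) := by
  have h4 : (0:ℝ) < 1/4 := by norm_num
  refine Integrable.mono' (((integrable_exp_neg_mul_sq h4).const_mul
    (4 * (Real.sqrt (2 * Real.pi))⁻¹))) ?_ ?_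
  · exact ((continuous_pow 2).mul continuous_gpdf).aestronglyMeasurable
  · filter_upwards with t
    rw [Real.norm_eq_abs, abs_of_nonneg (mul_nonneg (sq_nonneg t) (gpdf_nonneg t))]
    have h1 : t ^ 2 ≤ 4 * Real.exp ((1/4) * t ^ 2) := by
      have := Real.add_one_le_exp ((1/4) * t ^ 2)
      nlinarith [Real.exp_pos ((1/4) * t^2), sq_nonneg t]
    have h2 : Real.exp (-(1/2) * t ^ 2)
        = Real.exp (-(1/4) * t ^ 2) * Real.exp (-(1/4) * t^2) := by
      rw [← Real.exp_add]; ring_nf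
    unfold gpdf
    rw [h2]
    have h3 : Real.exp ((1/4) * t ^ 2) * Real.exp (-(1/4) * t ^ 2) = 1 := by
      rw [← Real.exp_add]; ring_nf; exact Real.exp_zero
    have hc : (0:ℝ) ≤ (Real.sqrt (2 * Real.pi))⁻¹ := by positivity
    calc t ^ 2 * ((Real.sqrt (2 * Real.pi))⁻¹ * (Real.exp (-(1/4) * t ^ 2) * Real.exp (-(1/4) * t^2)))
        ≤ (4 * Real.exp ((1/4) * t ^ 2)) * ((Real.sqrt (2 * Real.pi))⁻¹ * (Real.exp (-(1/4) * t ^ 2) * Real.exp (-(1/4) * t^2))) := by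
          apply mul_le_mul_of_nonneg_right h1; positivity
      _ = 4 * (Real.sqrt (2 * Real.pi))⁻¹ * (Real.exp ((1/4) * t ^ 2) * Real.exp (-(1/4) * t ^ 2)) * Real.exp (-(1/4) * t^2) := by ring
      _ = 4 * (Real.sqrt (2 * Real.pi))⁻¹ * Real.exp (-(1/4) * t ^ 2) := by rw [h3]; ring

lemma integral_odd {f : ℝ → ℝ} (hf : ∀ t, f (-t) = - f t) : ∫ t, f t = 0 := by
  have A : MeasurableEmbedding fun x : ℝ => -x :=
    (Homeomorph.neg ℝ).isClosedEmbedding.measurableEmbedding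
  have h : ∫ t, f t = ∫ t, f (-t) := by
    conv_lhs => rw [← Measure.map_neg_eq_self (volume : Measure ℝ)]
    exact A.integral_map f
  simp only [hf, integral_neg] at h
  linarith

lemma integral_id_gpdf : ∫ t, t * gpdf t = 0 := by
  refine integral_odd fun t => ?_
  rw [gpdf_neg]; ring

lemma abs_sign_le (t : ℝ) : |Real.sign t| ≤ 1 := by
  rcases lt_trichotomy t 0 with h | h | h
  · rw [Real.sign_of_neg h]; norm_num
  · rw [h, Real.sign_zero]; norm_num
  · rw [Real.sign_of_pos h]; norm_num

lemma rsign_mul_self (t : ℝ) : Real.sign t * t = |t| := by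
  rcases lt_trichotomy t 0 with h | h | h
  · rw [Real.sign_of_neg h, abs_of_neg h]; ring
  · simp [h]
  · rw [Real.sign_of_pos h, abs_of_pos h]; ring

lemma measurable_rsign : Measurable Real.sign := by
  have h : Real.sign = fun r : ℝ => if r < 0 then (-1:ℝ) else if 0 < r then 1 else 0 :=
    funext fun r => rfl
  rw [h]
  exact Measurable.ite (measurableSet_lt measurable_id measurable_const) measurable_const
    (Measurable.ite (measurableSet_lt measurable_const measurable_id) measurable_const
      measurable_const)

lemma integrable_sign_gpdf : Integrable (fun t => Real.sign t * gpdf t) := by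
  refine Integrable.mono' integrable_gpdf
    ((measurable_rsign.mul continuous_gpdf.measurable).aestronglyMeasurable) ?_
  filter_upwards with t
  rw [Real.norm_eq_abs, abs_mul, abs_of_nonneg (gpdf_nonneg t)]
  exact mul_le_of_le_one_left (gpdf_nonneg t) (abs_sign_le t)

lemma integral_sign_gpdf : ∫ t, Real.sign t * gpdf t = 0 := by
  refine integral_odd fun t => ?_
  rw [gpdf_neg, Real.sign_neg]; ring

lemma tendsto_exp_half : Filter.Tendsto (fun x : ℝ => Real.exp (-(1/2) * x^2)) atTop (nhds 0) :=
  (exp_neg_mul_sq_isLittleO_exp_neg (by norm_num : (0:ℝ) < 1/2)).trans_tendsto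
    (Real.tendsto_exp_neg_atTop_nhds_zero)

lemma tendsto_exp_half_lin : Filter.Tendsto (fun x : ℝ => Real.exp (-(1/2) * x)) atTop (nhds 0) := by
  have h2 : Filter.Tendsto (fun x : ℝ => (1/2) * x) atTop atTop :=
    Filter.Tendsto.const_mul_atTop (by norm_num) tendsto_id
  have h1 : Filter.Tendsto (fun x : ℝ => -(1/2) * x) atTop atBot := by
    refine (tendsto_neg_atTop_atBot.comp h2).congr fun x => ?_
    simp only [Function.comp_apply]; ring
  exact Real.tendsto_exp_atBot.comp h1

lemma tendsto_mul_exp_half : Filter.Tendsto (fun x : ℝ => x * Real.exp (-(1/2) * x^2)) atTop (nhds 0) := by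
  have h := (rpow_mul_exp_neg_mul_sq_isLittleO_exp_neg (by norm_num : (0:ℝ) < 1/2)
    1).trans_tendsto tendsto_exp_half_lin
  refine h.congr' ?_
  filter_upwards with x
  rw [Real.rpow_one]

lemma hasDerivAt_F (x : ℝ) :
    HasDerivAt (fun t : ℝ => -Real.exp (-(1/2) * t^2)) (x * Real.exp (-(1/2) * x^2)) x := by
  have h1 : HasDerivAt (fun t : ℝ => -(1/2) * t^2) (-(1/2) * (2 * x)) x := by
    simpa using (hasDerivAt_pow 2 x).const_mul (-(1/2) : ℝ)
  have := (h1.exp).neg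
  exact this.congr_deriv (by ring)

lemma integral_Ioi_mul_exp : ∫ t in Set.Ioi (0:ℝ), t * Real.exp (-(1/2) * t^2) = 1 := by
  have := integral_Ioi_of_hasDerivAt_of_tendsto' (a := 0)
    (f := fun t : ℝ => -Real.exp (-(1/2) * t^2))
    (fun x _ => hasDerivAt_F x)
    ((integrable_mul_exp_neg_mul_sq (by norm_num : (0:ℝ) < 1/2)).integrableOn)
    (by simpa using tendsto_exp_half.neg)
  simpa using this

lemma integral_abs_gpdf : ∫ t, |t| * gpdf t = Real.sqrt (2 / Real.pi) := by
  have h1 : ∀ t : ℝ, t * gpdf t = (Real.sqrt (2 * Real.pi))⁻¹ * (t * Real.exp (-(1/2) * t^2)) := by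
    intro t; unfold gpdf; ring
  have h4 : Real.sqrt (2 / Real.pi) * Real.sqrt (2 * Real.pi) = 2 := by
    rw [← Real.sqrt_mul (by positivity)]
    rw [show (2 / Real.pi) * (2 * Real.pi) = 2^2 by
      field_simp]
    exact Real.sqrt_sq (by norm_num)
  have h2 : ∫ x, |x| * gpdf x = 2 * ∫ t in Set.Ioi (0:ℝ), t * gpdf t := by
    rw [← integral_comp_abs (f := fun t => t * gpdf t)]
    congr 1; funext x
    show |x| * gpdf x = |x| * gpdf |x|
    congr 1
    simp [gpdf, sq_abs]
  rw [h2]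
  simp_rw [h1]
  rw [integral_const_mul, integral_Ioi_mul_exp, mul_one]
  calc 2 * (Real.sqrt (2 * Real.pi))⁻¹
      = (Real.sqrt (2 / Real.pi) * Real.sqrt (2 * Real.pi)) * (Real.sqrt (2 * Real.pi))⁻¹ := by
        rw [h4]
    _ = Real.sqrt (2 / Real.pi) := by
        field_simp

lemma integrable_sq_exp : Integrable (fun t : ℝ => t^2 * Real.exp (-(1/2) * t^2)) := by
  have := integrable_sq_gpdf.const_mul (Real.sqrt (2*Real.pi))
  refine this.congr ?_
  filter_upwards with t
  unfold gpdf
  have hne := ne_of_gt sqrt_two_pi_pos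
  field_simp

lemma integral_Ioi_exp_half :
    ∫ t in Set.Ioi (0:ℝ), Real.exp (-(1/2) * t^2) = Real.sqrt (2*Real.pi) / 2 := by
  have h0 : ∫ x : ℝ, Real.exp (-(1/2) * x^2) = Real.sqrt (2*Real.pi) := by
    rw [integral_gaussian, show Real.pi/(1/2) = 2*Real.pi by ring]
  have h2 := integral_comp_abs (f := fun t : ℝ => Real.exp (-(1/2) * t^2))
  have h3 : ∫ x : ℝ, (fun t : ℝ => Real.exp (-(1/2) * t^2)) |x|
      = ∫ x : ℝ, Real.exp (-(1/2) * x^2) := by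
    congr 1; funext x; simp [sq_abs]
  rw [h3, h0] at h2
  linarith

lemma hasDerivAt_G (x : ℝ) :
    HasDerivAt (fun t : ℝ => -t * Real.exp (-(1/2) * t^2))
      (x^2 * Real.exp (-(1/2) * x^2) - Real.exp (-(1/2) * x^2)) x := by
  have h1 : HasDerivAt (fun t : ℝ => -(1/2) * t^2) (-(1/2) * (2 * x)) x := by
    simpa using (hasDerivAt_pow 2 x).const_mul (-(1/2) : ℝ)
  have h2 := h1.exp
  have h3 : HasDerivAt (fun t : ℝ => -t) (-1 : ℝ) x := (hasDerivAt_id x).neg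
  have h4 := h3.mul h2
  exact h4.congr_deriv (by ring)

lemma integral_Ioi_sq_exp :
    ∫ t in Set.Ioi (0:ℝ), t^2 * Real.exp (-(1/2) * t^2) = Real.sqrt (2*Real.pi) / 2 := by
  have hA : IntegrableOn (fun t : ℝ => t^2 * Real.exp (-(1/2) * t^2)) (Set.Ioi 0) :=
    integrable_sq_exp.integrableOn
  have hB : IntegrableOn (fun t : ℝ => Real.exp (-(1/2) * t^2)) (Set.Ioi 0) :=
    (integrable_exp_neg_mul_sq (by norm_num : (0:ℝ) < 1/2)).integrableOn
  have hG : ∫ t in Set.Ioi (0:ℝ),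
      (t^2 * Real.exp (-(1/2) * t^2) - Real.exp (-(1/2) * t^2)) = 0 - (0 : ℝ) := by
    have htend : Filter.Tendsto (fun t : ℝ => -t * Real.exp (-(1/2) * t^2)) atTop (nhds 0) := by
      have h := tendsto_mul_exp_half.neg
      rw [neg_zero] at h
      exact h.congr fun x => by ring
    have := integral_Ioi_of_hasDerivAt_of_tendsto' (a := 0)
      (f := fun t : ℝ => -t * Real.exp (-(1/2) * t^2))
      (fun x _ => hasDerivAt_G x) (hA.sub hB) htend
    simpa using this
  rw [integral_sub hA hB] at hG
  rw [integral_Ioi_exp_half] at hG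
  linarith

lemma integral_sq_gpdf : ∫ t, t ^ 2 * gpdf t = 1 := by
  have h1 : ∀ t : ℝ, t^2 * gpdf t
      = (Real.sqrt (2*Real.pi))⁻¹ * (t^2 * Real.exp (-(1/2) * t^2)) := by
    intro t; unfold gpdf; ring
  simp_rw [h1]
  rw [integral_const_mul]
  have h2 : ∫ x : ℝ, x^2 * Real.exp (-(1/2) * x^2)
      = 2 * ∫ t in Set.Ioi (0:ℝ), t^2 * Real.exp (-(1/2) * t^2) := by
    rw [← integral_comp_abs (f := fun t => t^2 * Real.exp (-(1/2) * t^2))]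
    congr 1; funext x
    show x^2 * Real.exp (-(1/2) * x^2) = |x|^2 * Real.exp (-(1/2) * |x|^2)
    simp [sq_abs]
  rw [h2, integral_Ioi_sq_exp, show 2 * (Real.sqrt (2*Real.pi)/2) = Real.sqrt (2*Real.pi) by ring]
  exact inv_mul_cancel₀ (ne_of_gt sqrt_two_pi_pos)

open scoped RealInnerProductSpace

section MultiDim

variable {ι : Type*} [Fintype ι]

noncomputable def gdens (g : EuclideanSpace ℝ ι) : ℝ :=
  (Real.sqrt (2 * Real.pi))⁻¹ ^ (Fintype.card ι) * Real.exp (-(1/2) * ⟪g, g⟫)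

lemma gdens_nonneg (g : EuclideanSpace ℝ ι) : 0 ≤ gdens g := by
  unfold gdens; positivity

lemma continuous_gdens : Continuous (gdens (ι := ι)) := by
  apply Continuous.mul continuous_const
  exact Real.continuous_exp.comp (Continuous.mul continuous_const (continuous_id.inner continuous_id))

lemma sum_inner_sq (B : OrthonormalBasis ι ℝ (EuclideanSpace ℝ ι)) (g : EuclideanSpace ℝ ι) :
    ∑ i, (⟪B i, g⟫ : ℝ)^2 = ⟪g, g⟫ := by
  rw [← B.sum_inner_mul_inner g g]
  apply Finset.sum_congr rfl
  intro i _
  rw [pow_two, real_inner_comm g (B i)]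

lemma gdens_eq (B : OrthonormalBasis ι ℝ (EuclideanSpace ℝ ι)) (g : EuclideanSpace ℝ ι) :
    ∏ i, gpdf (⟪B i, g⟫ : ℝ) = gdens g := by
  unfold gpdf gdens
  rw [Finset.prod_mul_distrib, Finset.prod_const, ← Real.exp_sum, Finset.card_univ]
  congr 2
  rw [← Finset.mul_sum, sum_inner_sq B g]

lemma integral_ortho (B : OrthonormalBasis ι ℝ (EuclideanSpace ℝ ι)) (f : ι → ℝ → ℝ) :
    ∫ g : EuclideanSpace ℝ ι, ∏ i, f i (⟪B i, g⟫ : ℝ) = ∏ i, ∫ t, f i t := by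
  calc ∫ g : EuclideanSpace ℝ ι, ∏ i, f i (⟪B i, g⟫ : ℝ)
      = ∫ g : EuclideanSpace ℝ ι,
          (fun u : EuclideanSpace ℝ ι => ∏ i, f i (u i)) (B.measurableEquiv g) := by
        congr 1; funext g
        simp only
        exact Finset.prod_congr rfl fun i _ =>
          congrArg (f i) (B.repr_apply_apply g i).symm
    _ = ∫ u : EuclideanSpace ℝ ι, ∏ i, f i (u i) :=
        B.measurePreserving_measurableEquiv.integral_comp'
          (fun u : EuclideanSpace ℝ ι => ∏ i, f i (u i))
    _ = ∫ u : ι → ℝ, ∏ i, f i (u i) :=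
        (EuclideanSpace.volume_preserving_symm_measurableEquiv_toLp ι).integral_comp'
          (fun u : ι → ℝ => ∏ i, f i (u i))
    _ = ∏ i, ∫ t, f i t := integral_fintype_prod_eq_prod (ι := ι) f

lemma integrable_ortho (B : OrthonormalBasis ι ℝ (EuclideanSpace ℝ ι)) (f : ι → ℝ → ℝ)
    (hf : ∀ i, Integrable (f i)) :
    Integrable (fun g : EuclideanSpace ℝ ι => ∏ i, f i (⟪B i, g⟫ : ℝ)) := by
  have h0 : Integrable (fun u : ι → ℝ => ∏ i, f i (u i)) := Integrable.fintype_prod hf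
  have h1 : Integrable (fun u : EuclideanSpace ℝ ι => ∏ i, f i (u i)) := by
    exact ((EuclideanSpace.volume_preserving_symm_measurableEquiv_toLp ι).integrable_comp_emb
      (MeasurableEquiv.toLp 2 (ι → ℝ)).symm.measurableEmbedding).mpr h0
  have h2 : Integrable (fun g : EuclideanSpace ℝ ι =>
      (fun u : EuclideanSpace ℝ ι => ∏ i, f i (u i)) (B.measurableEquiv g)) := by
    exact (B.measurePreserving_measurableEquiv.integrable_comp_emb
      B.measurableEquiv.measurableEmbedding).mpr h1
  refine h2.congr ?_
  filter_upwards with g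
  exact Finset.prod_congr rfl fun i _ =>
    congrArg (f i) (B.repr_apply_apply g i)

end MultiDim

section Mini

variable {ι : Type*} [Fintype ι] [DecidableEq ι]

noncomputable def famA (k₀ k : ι) : ι → ℝ → ℝ := fun i t =>
  (if i = k₀ then Real.sign t else 1) * ((if i = k then t else 1) * gpdf t)

noncomputable def famB (k l : ι) : ι → ℝ → ℝ := fun i t =>
  (if i = k then t else 1) * ((if i = l then t else 1) * gpdf t)

lemma famA_prod (B : OrthonormalBasis ι ℝ (EuclideanSpace ℝ ι)) (k₀ k : ι)
    (g : EuclideanSpace ℝ ι) :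
    ∏ i, famA k₀ k i (⟪B i, g⟫ : ℝ)
      = Real.sign ⟪B k₀, g⟫ * (⟪B k, g⟫ * gdens g) := by
  unfold famA
  rw [Finset.prod_mul_distrib, Finset.prod_mul_distrib]
  rw [Finset.prod_ite_eq' Finset.univ k₀ (fun i => Real.sign (⟪B i, g⟫ : ℝ)),
    Finset.prod_ite_eq' Finset.univ k (fun i => (⟪B i, g⟫ : ℝ)),
    if_pos (Finset.mem_univ k₀), if_pos (Finset.mem_univ k), gdens_eq B g]

lemma famB_prod (B : OrthonormalBasis ι ℝ (EuclideanSpace ℝ ι)) (k l : ι)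
    (g : EuclideanSpace ℝ ι) :
    ∏ i, famB k l i (⟪B i, g⟫ : ℝ)
      = (⟪B k, g⟫ : ℝ) * (⟪B l, g⟫ * gdens g) := by
  unfold famB
  rw [Finset.prod_mul_distrib, Finset.prod_mul_distrib]
  rw [Finset.prod_ite_eq' Finset.univ k (fun i => (⟪B i, g⟫ : ℝ)),
    Finset.prod_ite_eq' Finset.univ l (fun i => (⟪B i, g⟫ : ℝ)),
    if_pos (Finset.mem_univ k), if_pos (Finset.mem_univ l), gdens_eq B g]

lemma sign_id_gpdf_eq (t : ℝ) : Real.sign t * (t * gpdf t) = |t| * gpdf t := by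
  rw [← rsign_mul_self]; ring

lemma id_id_gpdf_eq (t : ℝ) : t * (t * gpdf t) = t ^ 2 * gpdf t := by ring

lemma famA_integrable (k₀ k : ι) (i : ι) : Integrable (famA k₀ k i) := by
  unfold famA
  by_cases h0 : i = k₀ <;> by_cases h1 : i = k
  · simp only [if_pos h0, if_pos h1]
    refine integrable_abs_gpdf.congr ?_
    filter_upwards with t
    exact (sign_id_gpdf_eq t).symm
  · simp only [if_pos h0, if_neg h1, one_mul]
    exact integrable_sign_gpdf
  · simp only [if_neg h0, if_pos h1, one_mul]
    exact integrable_id_gpdf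
  · simp only [if_neg h0, if_neg h1, one_mul]
    exact integrable_gpdf

lemma famB_integrable (k l : ι) (i : ι) : Integrable (famB k l i) := by
  unfold famB
  by_cases h0 : i = k <;> by_cases h1 : i = l
  · simp only [if_pos h0, if_pos h1]
    refine integrable_sq_gpdf.congr ?_
    filter_upwards with t
    exact (id_id_gpdf_eq t).symm
  · simp only [if_pos h0, if_neg h1, one_mul]
    exact integrable_id_gpdf
  · simp only [if_neg h0, if_pos h1, one_mul]
    exact integrable_id_gpdf
  · simp only [if_neg h0, if_neg h1, one_mul]
    exact integrable_gpdf

lemma famA_integral (k₀ k : ι) :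
    ∏ i, ∫ t, famA k₀ k i t = if k = k₀ then Real.sqrt (2 / Real.pi) else 0 := by
  by_cases hk : k = k₀
  · subst hk
    rw [if_pos rfl]
    have h1 : ∀ i, ∫ t, famA k k i t = if i = k then Real.sqrt (2 / Real.pi) else 1 := by
      intro i
      by_cases h : i = k
      · have e : ∀ t : ℝ, famA k k i t = |t| * gpdf t := fun t => by
          simp [famA, h, sign_id_gpdf_eq]
        simp only [e, if_pos h]
        exact integral_abs_gpdf
      · have e : ∀ t : ℝ, famA k k i t = gpdf t := fun t => by
          simp [famA, h]
        simp only [e, if_neg h]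
        exact integral_gpdf
    rw [Finset.prod_congr rfl (fun i _ => h1 i), Finset.prod_ite_eq' Finset.univ k
      (fun _ => Real.sqrt (2 / Real.pi)), if_pos (Finset.mem_univ k)]
  · rw [if_neg hk]
    refine Finset.prod_eq_zero (Finset.mem_univ k₀) ?_
    have hk' : ¬ k₀ = k := fun h => hk h.symm
    have : ∀ t, famA k₀ k k₀ t = Real.sign t * gpdf t := by
      intro t
      simp [famA, hk']
    simp only [this]
    exact integral_sign_gpdf

lemma famB_integral (k l : ι) :
    ∏ i, ∫ t, famB k l i t = if k = l then 1 else 0 := by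
  by_cases hk : k = l
  · subst hk
    rw [if_pos rfl]
    have h1 : ∀ i, ∫ t, famB k k i t = (1 : ℝ) := by
      intro i
      by_cases h : i = k
      · have e : ∀ t : ℝ, famB k k i t = t ^ 2 * gpdf t := fun t => by
          simp [famB, h]; ring
        simp only [e]
        exact integral_sq_gpdf
      · have e : ∀ t : ℝ, famB k k i t = gpdf t := fun t => by
          simp [famB, h]
        simp only [e]
        exact integral_gpdf
    rw [Finset.prod_congr rfl (fun i _ => h1 i), Finset.prod_const_one]
  · rw [if_neg hk]
    refine Finset.prod_eq_zero (Finset.mem_univ k) ?_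
    have : ∀ t, famB k l k t = t * gpdf t := by
      intro t
      simp [famB, hk]
    simp only [this]
    exact integral_id_gpdf

end Mini

section Moments

variable {ι : Type*} [Fintype ι] [DecidableEq ι]

lemma mini1_integral (B : OrthonormalBasis ι ℝ (EuclideanSpace ℝ ι)) (k₀ k : ι) :
    ∫ g : EuclideanSpace ℝ ι, Real.sign ⟪B k₀, g⟫ * ((⟪B k, g⟫ : ℝ) * gdens g)
      = if k = k₀ then Real.sqrt (2 / Real.pi) else 0 := by
  rw [← famA_integral k₀ k, ← integral_ortho B (famA k₀ k)]
  congr 1; funext g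
  exact (famA_prod B k₀ k g).symm

lemma mini1_int (B : OrthonormalBasis ι ℝ (EuclideanSpace ℝ ι)) (k₀ k : ι) :
    Integrable (fun g : EuclideanSpace ℝ ι =>
      Real.sign ⟪B k₀, g⟫ * ((⟪B k, g⟫ : ℝ) * gdens g)) := by
  refine (integrable_ortho B (famA k₀ k) (famA_integrable k₀ k)).congr ?_
  filter_upwards with g
  exact famA_prod B k₀ k g

lemma mini2_integral (B : OrthonormalBasis ι ℝ (EuclideanSpace ℝ ι)) (k l : ι) :
    ∫ g : EuclideanSpace ℝ ι, (⟪B k, g⟫ : ℝ) * ((⟪B l, g⟫ : ℝ) * gdens g)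
      = if k = l then 1 else 0 := by
  rw [← famB_integral k l, ← integral_ortho B (famB k l)]
  congr 1; funext g
  exact (famB_prod B k l g).symm

lemma mini2_int (B : OrthonormalBasis ι ℝ (EuclideanSpace ℝ ι)) (k l : ι) :
    Integrable (fun g : EuclideanSpace ℝ ι =>
      (⟪B k, g⟫ : ℝ) * ((⟪B l, g⟫ : ℝ) * gdens g)) := by
  refine (integrable_ortho B (famB k l) (famB_integrable k l)).congr ?_
  filter_upwards with g
  exact famB_prod B k l g

lemma nonempty_of_unit (a : EuclideanSpace ℝ ι) (ha : ‖a‖ = 1) : Nonempty ι := by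
  by_contra h
  rw [not_nonempty_iff] at h
  have : a = 0 := PiLp.ext fun i => h.elim i
  rw [this, norm_zero] at ha
  exact one_ne_zero ha.symm

lemma exists_onb_eq (a : EuclideanSpace ℝ ι) (ha : ‖a‖ = 1) (k₀ : ι) :
    ∃ B : OrthonormalBasis ι ℝ (EuclideanSpace ℝ ι), B k₀ = a := by
  have hcard : Module.finrank ℝ (EuclideanSpace ℝ ι) = Fintype.card ι := finrank_euclideanSpace
  have horth : Orthonormal ℝ (Set.restrict {k₀} (fun _ : ι => a)) :=
    ⟨fun _ => ha, fun {i j} hij => absurd (Subsingleton.elim i j) hij⟩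
  obtain ⟨B, hB⟩ := horth.exists_orthonormalBasis_extension_of_card_eq hcard
  exact ⟨B, hB k₀ rfl⟩

lemma inner_expand (B : OrthonormalBasis ι ℝ (EuclideanSpace ℝ ι))
    (y g : EuclideanSpace ℝ ι) :
    (⟪y, g⟫ : ℝ) = ∑ k, (⟪B k, y⟫ : ℝ) * ⟪B k, g⟫ := by
  rw [← B.sum_inner_mul_inner y g]
  exact Finset.sum_congr rfl fun k _ => by rw [real_inner_comm y (B k)]

lemma L1_key (B : OrthonormalBasis ι ℝ (EuclideanSpace ℝ ι)) (k₀ : ι)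
    (y g : EuclideanSpace ℝ ι) :
    Real.sign ⟪B k₀, g⟫ * ((⟪y, g⟫ : ℝ) * gdens g)
      = ∑ k, (⟪B k, y⟫ : ℝ) * (Real.sign ⟪B k₀, g⟫ * ((⟪B k, g⟫ : ℝ) * gdens g)) := by
  rw [inner_expand B y g]
  rw [Finset.sum_mul, Finset.mul_sum]
  exact Finset.sum_congr rfl fun k _ => by ring

lemma L1_integrable (a y : EuclideanSpace ℝ ι) (ha : ‖a‖ = 1) :
    Integrable (fun g : EuclideanSpace ℝ ι =>
      Real.sign ⟪a, g⟫ * ((⟪y, g⟫ : ℝ) * gdens g)) := by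
  have hne : Nonempty ι := nonempty_of_unit a ha
  obtain ⟨k₀⟩ := hne
  obtain ⟨B, hB⟩ := exists_onb_eq a ha k₀
  have h : Integrable (fun g : EuclideanSpace ℝ ι =>
      ∑ k, (⟪B k, y⟫ : ℝ) * (Real.sign ⟪B k₀, g⟫ * ((⟪B k, g⟫ : ℝ) * gdens g))) :=
    integrable_finset_sum _ fun k _ => (mini1_int B k₀ k).const_mul _
  refine h.congr ?_
  filter_upwards with g
  rw [← L1_key B k₀ y g, hB]

lemma L1_integral (a y : EuclideanSpace ℝ ι) (ha : ‖a‖ = 1) :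
    ∫ g : EuclideanSpace ℝ ι, Real.sign ⟪a, g⟫ * ((⟪y, g⟫ : ℝ) * gdens g)
      = Real.sqrt (2 / Real.pi) * ⟪a, y⟫ := by
  have hne : Nonempty ι := nonempty_of_unit a ha
  obtain ⟨k₀⟩ := hne
  obtain ⟨B, hB⟩ := exists_onb_eq a ha k₀
  calc ∫ g : EuclideanSpace ℝ ι, Real.sign ⟪a, g⟫ * ((⟪y, g⟫ : ℝ) * gdens g)
      = ∫ g : EuclideanSpace ℝ ι,
          ∑ k, (⟪B k, y⟫ : ℝ) * (Real.sign ⟪B k₀, g⟫ * ((⟪B k, g⟫ : ℝ) * gdens g)) := by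
        congr 1; funext g
        rw [← L1_key B k₀ y g, hB]
    _ = ∑ k, ∫ g : EuclideanSpace ℝ ι,
          (⟪B k, y⟫ : ℝ) * (Real.sign ⟪B k₀, g⟫ * ((⟪B k, g⟫ : ℝ) * gdens g)) :=
        integral_finset_sum _ fun k _ => (mini1_int B k₀ k).const_mul _
    _ = ∑ k, (⟪B k, y⟫ : ℝ) * (if k = k₀ then Real.sqrt (2 / Real.pi) else 0) := by
        refine Finset.sum_congr rfl fun k _ => ?_
        rw [integral_const_mul, mini1_integral B k₀ k]
    _ = Real.sqrt (2 / Real.pi) * ⟪a, y⟫ := by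
        have h1 : ∀ k, (⟪B k, y⟫ : ℝ) * (if k = k₀ then Real.sqrt (2 / Real.pi) else 0)
            = if k = k₀ then (⟪B k, y⟫ : ℝ) * Real.sqrt (2 / Real.pi) else 0 := by
          intro k; split <;> simp
        rw [Finset.sum_congr rfl fun k _ => h1 k,
          Finset.sum_ite_eq' Finset.univ k₀ (fun k => (⟪B k, y⟫ : ℝ) * Real.sqrt (2 / Real.pi)),
          if_pos (Finset.mem_univ k₀), hB, mul_comm]

lemma L2_key (B : OrthonormalBasis ι ℝ (EuclideanSpace ℝ ι)) (y g : EuclideanSpace ℝ ι) :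
    (⟪y, g⟫ : ℝ)^2 * gdens g
      = ∑ k, ∑ l, (⟪B k, y⟫ : ℝ) * (⟪B l, y⟫ : ℝ)
          * ((⟪B k, g⟫ : ℝ) * ((⟪B l, g⟫ : ℝ) * gdens g)) := by
  rw [pow_two, inner_expand B y g, Finset.sum_mul_sum, Finset.sum_mul]
  refine Finset.sum_congr rfl fun k _ => ?_
  rw [Finset.sum_mul]
  exact Finset.sum_congr rfl fun l _ => by ring

lemma L2_integrable (y : EuclideanSpace ℝ ι) :
    Integrable (fun g : EuclideanSpace ℝ ι => (⟪y, g⟫ : ℝ)^2 * gdens g) := by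
  set B := EuclideanSpace.basisFun ι ℝ
  have h : Integrable (fun g : EuclideanSpace ℝ ι =>
      ∑ k, ∑ l, (⟪B k, y⟫ : ℝ) * (⟪B l, y⟫ : ℝ)
        * ((⟪B k, g⟫ : ℝ) * ((⟪B l, g⟫ : ℝ) * gdens g))) :=
    integrable_finset_sum _ fun k _ =>
      integrable_finset_sum _ fun l _ => (mini2_int B k l).const_mul _
  refine h.congr ?_
  filter_upwards with g
  exact (L2_key B y g).symm

lemma L2_integral (y : EuclideanSpace ℝ ι) :
    ∫ g : EuclideanSpace ℝ ι, (⟪y, g⟫ : ℝ)^2 * gdens g = ⟪y, y⟫ := by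
  set B := EuclideanSpace.basisFun ι ℝ
  calc ∫ g : EuclideanSpace ℝ ι, (⟪y, g⟫ : ℝ)^2 * gdens g
      = ∫ g : EuclideanSpace ℝ ι, ∑ k, ∑ l, (⟪B k, y⟫ : ℝ) * (⟪B l, y⟫ : ℝ)
          * ((⟪B k, g⟫ : ℝ) * ((⟪B l, g⟫ : ℝ) * gdens g)) := by
        congr 1; funext g; exact L2_key B y g
    _ = ∑ k, ∫ g : EuclideanSpace ℝ ι, ∑ l, (⟪B k, y⟫ : ℝ) * (⟪B l, y⟫ : ℝ)
          * ((⟪B k, g⟫ : ℝ) * ((⟪B l, g⟫ : ℝ) * gdens g)) :=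
        integral_finset_sum _ fun k _ =>
          integrable_finset_sum _ fun l _ => (mini2_int B k l).const_mul _
    _ = ∑ k, ∑ l, ∫ g : EuclideanSpace ℝ ι, (⟪B k, y⟫ : ℝ) * (⟪B l, y⟫ : ℝ)
          * ((⟪B k, g⟫ : ℝ) * ((⟪B l, g⟫ : ℝ) * gdens g)) :=
        Finset.sum_congr rfl fun k _ =>
          integral_finset_sum _ fun l _ => (mini2_int B k l).const_mul _
    _ = ∑ k, ∑ l, (⟪B k, y⟫ : ℝ) * (⟪B l, y⟫ : ℝ) * (if k = l then (1:ℝ) else 0) := by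
        refine Finset.sum_congr rfl fun k _ => Finset.sum_congr rfl fun l _ => ?_
        rw [integral_const_mul, mini2_integral B k l]
    _ = ∑ k, (⟪B k, y⟫ : ℝ)^2 := by
        refine Finset.sum_congr rfl fun k _ => ?_
        have h1 : ∀ l, (⟪B k, y⟫ : ℝ) * (⟪B l, y⟫ : ℝ) * (if k = l then (1:ℝ) else 0)
            = if l = k then (⟪B k, y⟫ : ℝ) * (⟪B l, y⟫ : ℝ) else 0 := by
          intro l
          by_cases h : k = l
          · rw [if_pos h, if_pos h.symm, mul_one]
          · rw [if_neg h, if_neg (fun hc => h hc.symm), mul_zero]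
        rw [Finset.sum_congr rfl fun l _ => h1 l,
          Finset.sum_ite_eq' Finset.univ k (fun l => (⟪B k, y⟫ : ℝ) * (⟪B l, y⟫ : ℝ)),
          if_pos (Finset.mem_univ k), pow_two]
    _ = ⟪y, y⟫ := sum_inner_sq B y

end Moments


section NormGlue

variable {n d : ℕ}

lemma normSet_bddAbove (M : Matrix (Fin n) (Fin d) ℝ) :
    BddAbove {t | ∃ v : Fin d → ℝ, (∑ j, (v j) ^ 2) = 1 ∧ t = ∑ i, |∑ j, M i j * v j|} := by
  refine ⟨∑ i, ∑ j, |M i j|, ?_⟩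
  rintro t ⟨v, hv, rfl⟩
  have hvj : ∀ j, |v j| ≤ 1 := by
    intro j
    have h1 : (v j)^2 ≤ 1 := by
      rw [← hv]
      exact Finset.single_le_sum (f := fun j => (v j)^2) (fun j _ => sq_nonneg _)
        (Finset.mem_univ j)
    exact (sq_le_one_iff_abs_le_one (a := v j)).mp h1
  refine Finset.sum_le_sum fun i _ => ?_
  calc |∑ j, M i j * v j| ≤ ∑ j, |M i j * v j| := Finset.abs_sum_le_sum_abs _ _
    _ ≤ ∑ j, |M i j| := Finset.sum_le_sum fun j _ => by
        rw [abs_mul]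
        exact mul_le_of_le_one_right (abs_nonneg _) (hvj j)

lemma le_normTwoToOne (M : Matrix (Fin n) (Fin d) ℝ) (v : Fin d → ℝ)
    (hv : ∑ j, (v j) ^ 2 = 1) : ∑ i, |∑ j, M i j * v j| ≤ normTwoToOne M :=
  le_csSup (normSet_bddAbove M) ⟨v, hv, rfl⟩

lemma normTwoToOne_nonneg (M : Matrix (Fin n) (Fin d) ℝ) : 0 ≤ normTwoToOne M := by
  rcases Nat.eq_zero_or_pos d with hd | hd
  · subst hd
    have hempty : {t | ∃ v : Fin 0 → ℝ, (∑ j, (v j) ^ 2) = 1 ∧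
        t = ∑ i, |∑ j, M i j * v j|} = ∅ := by
      ext t
      simp
    rw [normTwoToOne, hempty, Real.sSup_empty]
  · set j₀ : Fin d := ⟨0, hd⟩
    have hv : ∑ j, ((Pi.single j₀ 1 : Fin d → ℝ) j) ^ 2 = 1 := by
      rw [Finset.sum_eq_single j₀]
      · simp
      · intro j _ hj; simp [Pi.single_apply, hj]
      · intro h; exact absurd (Finset.mem_univ j₀) h
    refine le_trans ?_ (le_normTwoToOne M _ hv)
    exact Finset.sum_nonneg fun i _ => abs_nonneg _

lemma norm_w_bound (M : Matrix (Fin n) (Fin d) ℝ) (w : Fin d → ℝ) :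
    ∑ i, |∑ j, M i j * w j| ≤ Real.sqrt (∑ j, (w j) ^ 2) * normTwoToOne M := by
  have hsum : (0:ℝ) ≤ ∑ j, (w j)^2 := Finset.sum_nonneg fun j _ => sq_nonneg _
  rcases eq_or_lt_of_le (Real.sqrt_nonneg (∑ j, (w j)^2)) with h0 | h0
  · have hz : ∑ j, (w j)^2 = 0 := by
      have := Real.sqrt_eq_zero'.mp h0.symm
      linarith
    have hws : ∀ j ∈ Finset.univ, (w j)^2 = 0 :=
      (Finset.sum_eq_zero_iff_of_nonneg fun j _ => sq_nonneg _).mp hz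
    have hw0 : ∀ j, w j = 0 := fun j => by
      have := hws j (Finset.mem_univ j)
      exact pow_eq_zero_iff (n := 2) (by norm_num) |>.mp this
    simp [hw0]
  · set s := Real.sqrt (∑ j, (w j)^2) with hs
    have hs2 : s ^ 2 = ∑ j, (w j)^2 := Real.sq_sqrt hsum
    have hpos : 0 < ∑ j, (w j)^2 := by nlinarith
    set v : Fin d → ℝ := fun j => w j / s with hvdef
    have hv : ∑ j, (v j)^2 = 1 := by
      simp only [hvdef, div_pow]
      rw [← Finset.sum_div, hs2]
      exact div_self (ne_of_gt hpos)
    have h := le_normTwoToOne M v hv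
    have hexp : ∀ i, |∑ j, M i j * v j| = |∑ j, M i j * w j| / s := by
      intro i
      simp only [hvdef]
      rw [show ∑ j, M i j * (w j / s) = (∑ j, M i j * w j) / s by
        rw [Finset.sum_div]; exact Finset.sum_congr rfl fun j _ => by ring]
      rw [abs_div, abs_of_pos h0]
    rw [Finset.sum_congr rfl (fun i _ => hexp i), ← Finset.sum_div, div_le_iff₀ h0] at h
    linarith

end NormGlue

section Core

variable {ι : Type*} [Fintype ι] [DecidableEq ι]

lemma gdens_prob : ∫ g : EuclideanSpace ℝ ι, gdens g = 1 := by
  set B := EuclideanSpace.basisFun ι ℝ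
  calc ∫ g : EuclideanSpace ℝ ι, gdens g
      = ∫ g : EuclideanSpace ℝ ι, ∏ i, gpdf (⟪B i, g⟫ : ℝ) := by
        congr 1; funext g; exact (gdens_eq B g).symm
    _ = ∏ _i : ι, ∫ t, gpdf t := integral_ortho B (fun _ => gpdf)
    _ = 1 := by simp [integral_gpdf]

lemma gdens_integrable : Integrable (gdens (ι := ι)) := by
  set B := EuclideanSpace.basisFun ι ℝ
  refine (integrable_ortho B (fun _ => gpdf) (fun _ => integrable_gpdf)).congr ?_
  filter_upwards with g
  exact gdens_eq B g

lemma core {n d : ℕ} (M : Matrix (Fin n) (Fin d) ℝ)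
    (x : Fin n → EuclideanSpace ℝ ι) (y : Fin d → EuclideanSpace ℝ ι)
    (hx : ∀ i, ‖x i‖ = 1) (hy : ∑ j, (⟪y j, y j⟫ : ℝ) = 1) :
    ∑ i, ∑ j, M i j * (⟪x i, y j⟫ : ℝ) ≤ Real.sqrt (Real.pi / 2) * normTwoToOne M := by
  set K := normTwoToOne M with hKdef
  have hK : 0 ≤ K := normTwoToOne_nonneg M
  set c := Real.sqrt (2 / Real.pi) with hcdef
  have hcc : c * Real.sqrt (Real.pi / 2) = 1 := by
    rw [hcdef, ← Real.sqrt_mul (by positivity)]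
    rw [show (2 / Real.pi) * (Real.pi / 2) = 1 by
      field_simp]
    exact Real.sqrt_one
  -- the integrand F
  set F : EuclideanSpace ℝ ι → ℝ := fun g =>
    ∑ i, ∑ j, M i j * (Real.sign ⟪x i, g⟫ * ((⟪y j, g⟫ : ℝ) * gdens g)) with hFdef
  have Fint : Integrable F :=
    integrable_finset_sum _ fun i _ => integrable_finset_sum _ fun j _ =>
      (L1_integrable (x i) (y j) (hx i)).const_mul _
  have hFval : ∫ g, F g = c * ∑ i, ∑ j, M i j * (⟪x i, y j⟫ : ℝ) := by
    rw [hFdef]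
    beta_reduce
    rw [integral_finset_sum _ (fun i _ => integrable_finset_sum _ fun j _ =>
      (L1_integrable (x i) (y j) (hx i)).const_mul _ : ∀ i ∈ Finset.univ, Integrable (fun g =>
        ∑ j, M i j * (Real.sign ⟪x i, g⟫ * ((⟪y j, g⟫ : ℝ) * gdens g))))]
    rw [Finset.mul_sum]
    refine Finset.sum_congr rfl fun i _ => ?_
    rw [integral_finset_sum _ fun j _ => (L1_integrable (x i) (y j) (hx i)).const_mul _]
    rw [Finset.mul_sum]
    refine Finset.sum_congr rfl fun j _ => ?_
    rw [integral_const_mul, L1_integral (x i) (y j) (hx i)]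
    ring
  -- G and its facts
  set G : EuclideanSpace ℝ ι → ℝ := fun g => ∑ j, (⟪y j, g⟫ : ℝ)^2 with hGdef
  have hGnonneg : ∀ g, 0 ≤ G g := fun g => Finset.sum_nonneg fun j _ => sq_nonneg _
  have GInt : Integrable (fun g : EuclideanSpace ℝ ι => G g * gdens g) := by
    have h : Integrable (fun g : EuclideanSpace ℝ ι =>
        ∑ j, (⟪y j, g⟫ : ℝ)^2 * gdens g) :=
      integrable_finset_sum _ fun j _ => L2_integrable (y j)
    refine h.congr ?_
    filter_upwards with g
    rw [hGdef]
    rw [Finset.sum_mul]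
  have hGval : ∫ g : EuclideanSpace ℝ ι, G g * gdens g = 1 := by
    have h1 : ∫ g : EuclideanSpace ℝ ι, G g * gdens g
        = ∫ g : EuclideanSpace ℝ ι, ∑ j, (⟪y j, g⟫ : ℝ)^2 * gdens g := by
      congr 1; funext g; rw [hGdef, Finset.sum_mul]
    rw [h1, integral_finset_sum _ fun j _ => L2_integrable (y j)]
    rw [Finset.sum_congr rfl fun j _ => L2_integral (y j)]
    exact hy
  have hGcont : Continuous G := by
    rw [hGdef]
    exact continuous_finset_sum _ fun j _ =>
      (Continuous.inner continuous_const continuous_id).pow 2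
  have hsqrt_le : ∀ g, Real.sqrt (G g) ≤ (G g + 1) / 2 := by
    intro g
    have h1 := sq_nonneg (Real.sqrt (G g) - 1)
    have h2 : Real.sqrt (G g) ^ 2 = G g := Real.sq_sqrt (hGnonneg g)
    nlinarith
  have majInt : Integrable (fun g : EuclideanSpace ℝ ι =>
      1/2 * (G g * gdens g + gdens g)) := (GInt.add gdens_integrable).const_mul (1/2)
  have sqrtG_int : Integrable (fun g : EuclideanSpace ℝ ι => Real.sqrt (G g) * gdens g) := by
    refine Integrable.mono' majInt ?_ ?_
    · exact ((Real.continuous_sqrt.comp hGcont).mul continuous_gdens).aestronglyMeasurable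
    · filter_upwards with g
      rw [Real.norm_eq_abs,
        abs_of_nonneg (mul_nonneg (Real.sqrt_nonneg _) (gdens_nonneg g))]
      calc Real.sqrt (G g) * gdens g ≤ ((G g + 1) / 2) * gdens g :=
            mul_le_mul_of_nonneg_right (hsqrt_le g) (gdens_nonneg g)
        _ = 1/2 * (G g * gdens g + gdens g) := by ring
  have hval2 : ∫ g : EuclideanSpace ℝ ι, 1/2 * (G g * gdens g + gdens g) = 1 := by
    rw [integral_const_mul, integral_add GInt gdens_integrable, hGval, gdens_prob]
    norm_num
  have hsqrtGval : ∫ g : EuclideanSpace ℝ ι, Real.sqrt (G g) * gdens g ≤ 1 := by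
    have h := integral_mono sqrtG_int majInt ?_
    · rw [hval2] at h
      exact h
    · intro g
      calc Real.sqrt (G g) * gdens g ≤ ((G g + 1) / 2) * gdens g :=
            mul_le_mul_of_nonneg_right (hsqrt_le g) (gdens_nonneg g)
        _ = 1/2 * (G g * gdens g + gdens g) := by ring
  -- pointwise bound F ≤ sqrt G * gdens * K
  have hpt : ∀ g, F g ≤ Real.sqrt (G g) * gdens g * K := by
    intro g
    have hFg : F g = (∑ i, Real.sign (⟪x i, g⟫ : ℝ) * (∑ j, M i j * (⟪y j, g⟫ : ℝ)))
        * gdens g := by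
      rw [hFdef, Finset.sum_mul]
      refine Finset.sum_congr rfl fun i _ => ?_
      rw [Finset.mul_sum, Finset.sum_mul]
      refine Finset.sum_congr rfl fun j _ => by ring
    have hA : (∑ i, Real.sign (⟪x i, g⟫ : ℝ) * (∑ j, M i j * (⟪y j, g⟫ : ℝ)))
        ≤ Real.sqrt (G g) * K := by
      calc ∑ i, Real.sign (⟪x i, g⟫ : ℝ) * (∑ j, M i j * (⟪y j, g⟫ : ℝ))
          ≤ ∑ i, |∑ j, M i j * (⟪y j, g⟫ : ℝ)| := by
            refine Finset.sum_le_sum fun i _ => ?_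
            calc Real.sign (⟪x i, g⟫ : ℝ) * (∑ j, M i j * (⟪y j, g⟫ : ℝ))
                ≤ |Real.sign (⟪x i, g⟫ : ℝ) * (∑ j, M i j * (⟪y j, g⟫ : ℝ))| := le_abs_self _
              _ = |Real.sign (⟪x i, g⟫ : ℝ)| * |∑ j, M i j * (⟪y j, g⟫ : ℝ)| := abs_mul _ _
              _ ≤ |∑ j, M i j * (⟪y j, g⟫ : ℝ)| :=
                  mul_le_of_le_one_left (abs_nonneg _) (abs_sign_le _)
        _ ≤ Real.sqrt (∑ j, ((⟪y j, g⟫ : ℝ)) ^ 2) * normTwoToOne M :=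
            norm_w_bound M (fun j => (⟪y j, g⟫ : ℝ))
        _ = Real.sqrt (G g) * K := by rw [hGdef, hKdef]
    rw [hFg]
    calc (∑ i, Real.sign (⟪x i, g⟫ : ℝ) * (∑ j, M i j * (⟪y j, g⟫ : ℝ))) * gdens g
        ≤ (Real.sqrt (G g) * K) * gdens g :=
          mul_le_mul_of_nonneg_right hA (gdens_nonneg g)
      _ = Real.sqrt (G g) * gdens g * K := by ring
  have hmain : c * ∑ i, ∑ j, M i j * (⟪x i, y j⟫ : ℝ) ≤ K := by
    rw [← hFval]
    calc ∫ g, F g ≤ ∫ g : EuclideanSpace ℝ ι, Real.sqrt (G g) * gdens g * K :=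
          integral_mono Fint (sqrtG_int.mul_const K) hpt
      _ = (∫ g : EuclideanSpace ℝ ι, Real.sqrt (G g) * gdens g) * K := integral_mul_const _ _
      _ ≤ 1 * K := mul_le_mul_of_nonneg_right hsqrtGval hK
      _ = K := one_mul K
  have h2 := mul_le_mul_of_nonneg_left hmain (Real.sqrt_nonneg (Real.pi / 2))
  calc ∑ i, ∑ j, M i j * (⟪x i, y j⟫ : ℝ)
      = (c * Real.sqrt (Real.pi / 2)) * ∑ i, ∑ j, M i j * (⟪x i, y j⟫ : ℝ) := by
        rw [hcc, one_mul]
    _ = Real.sqrt (Real.pi / 2) * (c * ∑ i, ∑ j, M i j * (⟪x i, y j⟫ : ℝ)) := by ring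
    _ ≤ Real.sqrt (Real.pi / 2) * K := h2

end Core

open scoped MatrixOrder



/-- (Nesterov) The constant `K_{2→1} = √(π/2)` is at most `2`, and the optimal
value of the SDP relaxation `TOR` of the 2-to-1 norm of any matrix `M` is at
most `√(π/2)` times the 2-to-1 norm of `M`. -/
theorem torval_le_sqrt_pi_div_two_mul_normTwoToOne {n d : ℕ}
    (M : Matrix (Fin n) (Fin d) ℝ) :
    Real.sqrt (Real.pi / 2) ≤ 2 ∧
      TORval M ≤ Real.sqrt (Real.pi / 2) * normTwoToOne M := by
  constructor
  · have h4 : Real.sqrt (Real.pi / 2) ≤ Real.sqrt 4 :=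
      Real.sqrt_le_sqrt (by linarith [Real.pi_le_four])
    have h5 : Real.sqrt 4 = 2 := by
      rw [show (4:ℝ) = 2^2 by norm_num]
      exact Real.sqrt_sq (by norm_num)
    linarith
  · apply Real.sSup_le
    · rintro t ⟨X, hX, rfl⟩
      obtain ⟨hpsd, _h1, hsum, hdiag⟩ := hX
      have hS : CFC.sqrt X * CFC.sqrt X = X := CFC.sqrt_mul_sqrt_self X hpsd.nonneg
      have hherm : (CFC.sqrt X).IsHermitian := (CFC.sqrt_nonneg X).isSelfAdjoint
      set vec : TORIdx n d → EuclideanSpace ℝ (TORIdx n d) :=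
        fun a => (WithLp.toLp 2 (fun k => CFC.sqrt X k a) : EuclideanSpace ℝ (TORIdx n d)) with hvec
      have hinner : ∀ a b, (⟪vec a, vec b⟫ : ℝ) = X a b := by
        intro a b
        rw [← hS, Matrix.mul_apply]
        rw [PiLp.inner_apply]
        refine Finset.sum_congr rfl fun k _ => ?_
        simp only [hvec, RCLike.inner_apply, conj_trivial]
        rw [← hherm.apply a k]
        simp [mul_comm]
      have hxnorm : ∀ i, ‖vec (TORsig i)‖ = 1 := by
        intro i
        have h := hinner (TORsig i) (TORsig i)
        rw [hdiag i, real_inner_self_eq_norm_sq] at h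
        have hn := norm_nonneg (vec (TORsig i))
        nlinarith
      have hysum : ∑ j, (⟪vec (TORv j), vec (TORv j)⟫ : ℝ) = 1 := by
        rw [Finset.sum_congr rfl fun j _ => hinner (TORv j) (TORv j)]
        exact hsum
      have hcore := core M (fun i => vec (TORsig i)) (fun j => vec (TORv j)) hxnorm hysum
      calc ∑ i, ∑ j, M i j * X (TORsig i) (TORv j)
          = ∑ i, ∑ j, M i j * (⟪vec (TORsig i), vec (TORv j)⟫ : ℝ) := by
            refine Finset.sum_congr rfl fun i _ => Finset.sum_congr rfl fun j _ => ?_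
            rw [hinner]
        _ ≤ _ := hcore
    · exact mul_nonneg (Real.sqrt_nonneg _) (normTwoToOne_nonneg M)
end
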